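/- (Proposition 3, first part.) Let a ≥ 0 be an integer. Suppose f_{(0,a)} attains its minimum over {1, …, T} at some point τ_a ≤ T − s and f_{(0,0)} attains its minimum over {1, …, T} at some point τ₀ ≤ T − s. Then the virtual replacement cost satisfies b_{(s,a)} = b_a, where b_{(s,a)} = f*_{(s,a)} − f*_{(s,0)}, b_a = b_{(0,a)} = f*_{(0,a)} − f*_{(0,0)}, and f*_{(s',a')} = min over t ∈ {s' + 1, …, T} of f_{(s',a')}(t). -/

import Mathlib

open MeasureTheory ProbabilityTheory Real

/-- Proposition 3, first part: If `f_{(0,a)}` attains its minimum over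
`{1, …, T}` at some `τ_a ≤ T − s` and `f_{(0,0)}` attains its minimum over `{1, …, T}` at
some `τ₀ ≤ T − s`, then the virtual replacement cost satisfies `b_{(s,a)} = b_a`, i.e.
`f*_{(s,a)} − f*_{(s,0)} = f*_{(0,a)} − f*_{(0,0)}`. -/
theorem virtual_replacement_cost_time_invariant
    {Ω : Type*} [MeasureSpace Ω] [IsProbabilityMeasure (ℙ : Measure Ω)]
    (θ β g h m : ℝ) (hθ : 0 < θ) (hβ : 1 < β) (hg : 0 ≤ g) (hh : 0 ≤ h) (hm : 0 ≤ m)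
    (q : ℕ → ℝ)
    (hq : ∀ t : ℕ, 1 ≤ t →
      q t = ((1 - Real.exp (-θ * (t : ℝ) ^ β)) * g
            + Real.exp (-θ * (t : ℝ) ^ β) * (h + m * t))
          / ((∑ k ∈ Finset.Icc 1 t,
              (Real.exp (-θ * ((k : ℝ) - 1) ^ β) - Real.exp (-θ * (k : ℝ) ^ β)) * (k : ℝ))
            + Real.exp (-θ * (t : ℝ) ^ β) * (t : ℝ)))
    (c : ℝ) (hc : c = ⨅ t : ℕ, q (t + 1))
    (T s : ℕ) (hT : 1 ≤ T) (hsT : s < T)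
    (a : ℕ)
    -- the family of residual life lengths, one for each age
    (La : ℕ → Ω → ℕ) (hmeasLa : ∀ a', Measurable (La a')) (hposLa : ∀ a' ω, 1 ≤ La a' ω)
    (hsurvLa : ∀ a' : ℕ, ∀ u : ℕ, ℙ {ω | u < La a' ω}
      = ENNReal.ofReal (Real.exp (θ * ((a' : ℝ) ^ β - ((a' : ℝ) + u) ^ β))))
    -- the objective functions f_{(s',a')}
    (f : ℕ → ℕ → ℕ → ℝ)
    (hf : ∀ s' : ℕ, s' < T → ∀ a' : ℕ, ∀ t : ℕ, s' + 1 ≤ t → t ≤ T →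
      f s' a' t = ∫ ω, (if (s' : ℝ) + (La a' ω : ℝ) ≤ (t : ℝ) then
                  g + ((T : ℝ) - ((s' : ℝ) + (La a' ω : ℝ))) * c
                else h + ((t : ℝ) - (s' : ℝ) + (a' : ℝ)) * m
                      + ((T : ℝ) - (t : ℝ)) * c) ∂ℙ)
    -- f_{(0,a)} attains its minimum at τa ≤ T − s
    (τa : ℕ) (hτa1 : 1 ≤ τa) (hτa2 : τa ≤ T)
    (hτamin : ∀ t : ℕ, 1 ≤ t → t ≤ T → f 0 a τa ≤ f 0 a t)
    (hτa3 : τa + s ≤ T)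
    -- f_{(0,0)} attains its minimum at τ₀ ≤ T − s
    (τ₀ : ℕ) (hτ₀1 : 1 ≤ τ₀) (hτ₀2 : τ₀ ≤ T)
    (hτ₀min : ∀ t : ℕ, 1 ≤ t → t ≤ T → f 0 0 τ₀ ≤ f 0 0 t)
    (hτ₀3 : τ₀ + s ≤ T)
    (hne : (Finset.Icc (s + 1) T).Nonempty) (hne0 : (Finset.Icc 1 T).Nonempty) :
    (Finset.Icc (s + 1) T).inf' hne (f s a) - (Finset.Icc (s + 1) T).inf' hne (f s 0)
      = (Finset.Icc 1 T).inf' hne0 (f 0 a) - (Finset.Icc 1 T).inf' hne0 (f 0 0) := by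
  have hT' : (1 : ℝ) ≤ (T : ℝ) := by exact_mod_cast hT
  -- shift lemma : f s a' (t+s) = f 0 a' t - s*c
  have key : ∀ a' t : ℕ, 1 ≤ t → t + s ≤ T →
      f s a' (t + s) = f 0 a' t - (s : ℝ) * c := by
    intro a' t ht1 hts
    have ht2 : t ≤ T := le_trans (Nat.le_add_right t s) hts
    have h1 := hf s hsT a' (t + s) (by omega) hts
    have h2 := hf 0 (by omega) a' t (by omega) ht2
    set ψ : Ω → ℝ := fun ω => (if (0 : ℕ) + (La a' ω : ℝ) ≤ (t : ℝ) then
        g + ((T : ℝ) - ((0 : ℕ) + (La a' ω : ℝ))) * c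
      else h + ((t : ℝ) - (0 : ℕ) + ((a' : ℕ) : ℝ)) * m + ((T : ℝ) - (t : ℝ)) * c) with hψ
    have hint : Integrable ψ ℙ := by
      constructor
      · exact ((measurable_of_countable (fun n : ℕ => (if (0 : ℕ) + (n : ℝ) ≤ (t : ℝ) then
            g + ((T : ℝ) - ((0 : ℕ) + (n : ℝ))) * c
          else h + ((t : ℝ) - (0 : ℕ) + ((a' : ℕ) : ℝ)) * m
              + ((T : ℝ) - (t : ℝ)) * c))).comp (hmeasLa a')).aestronglyMeasurable
      · apply HasFiniteIntegral.of_bounded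
          (C := |g| + |h| + ((t : ℝ) + (a' : ℝ)) * |m| + 2 * ((T : ℝ) + (t : ℝ)) * |c|)
        filter_upwards with ω
        simp only [hψ, Real.norm_eq_abs]
        have hL1 : (1 : ℝ) ≤ (La a' ω : ℝ) := by exact_mod_cast hposLa a' ω
        have ht1' : (1 : ℝ) ≤ (t : ℝ) := by exact_mod_cast ht1
        have ha0 : (0 : ℝ) ≤ (a' : ℝ) := Nat.cast_nonneg a'
        have hc0 : (0 : ℝ) ≤ |c| := abs_nonneg c
        split_ifs with hcond
        · have hLt : (La a' ω : ℝ) ≤ (t : ℝ) := by push_cast at hcond; linarith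
          have habs : |(T : ℝ) - ((0 : ℕ) + (La a' ω : ℝ))| ≤ (T : ℝ) + (t : ℝ) := by
            rw [abs_le]; push_cast; constructor <;> linarith
          have h3 : |(T : ℝ) - ((0 : ℕ) + (La a' ω : ℝ))| * |c|
              ≤ ((T : ℝ) + (t : ℝ)) * |c| := mul_le_mul_of_nonneg_right habs hc0
          calc |g + ((T : ℝ) - ((0 : ℕ) + (La a' ω : ℝ))) * c|
              ≤ |g| + |((T : ℝ) - ((0 : ℕ) + (La a' ω : ℝ))) * c| := abs_add_le _ _
            _ = |g| + |(T : ℝ) - ((0 : ℕ) + (La a' ω : ℝ))| * |c| := by rw [abs_mul]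
            _ ≤ |g| + |h| + ((t : ℝ) + (a' : ℝ)) * |m| + 2 * ((T : ℝ) + (t : ℝ)) * |c| := by
                have hmn : (0 : ℝ) ≤ ((t : ℝ) + (a' : ℝ)) * |m| := by positivity
                have hc2 : (0 : ℝ) ≤ ((T : ℝ) + (t : ℝ)) * |c| := by positivity
                have := abs_nonneg h
                linarith
        · have habs1 : |(t : ℝ) - (0 : ℕ) + (a' : ℝ)| = (t : ℝ) + (a' : ℝ) := by
            rw [abs_of_nonneg (by push_cast; linarith)]; push_cast; ring
          have habs2 : |(T : ℝ) - (t : ℝ)| ≤ (T : ℝ) + (t : ℝ) := by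
            rw [abs_le]; constructor <;> linarith
          calc |h + ((t : ℝ) - (0 : ℕ) + ((a' : ℕ) : ℝ)) * m + ((T : ℝ) - (t : ℝ)) * c|
              ≤ |h + ((t : ℝ) - (0 : ℕ) + ((a' : ℕ) : ℝ)) * m| + |((T : ℝ) - (t : ℝ)) * c| :=
                abs_add_le _ _
            _ ≤ |h| + |((t : ℝ) - (0 : ℕ) + ((a' : ℕ) : ℝ)) * m| + |((T : ℝ) - (t : ℝ)) * c| := by
                have := abs_add_le h (((t : ℝ) - (0 : ℕ) + ((a' : ℕ) : ℝ)) * m)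
                linarith
            _ = |h| + |(t : ℝ) - (0 : ℕ) + (a' : ℝ)| * |m| + |(T : ℝ) - (t : ℝ)| * |c| := by
                rw [abs_mul, abs_mul]
            _ ≤ |g| + |h| + ((t : ℝ) + (a' : ℝ)) * |m| + 2 * ((T : ℝ) + (t : ℝ)) * |c| := by
                rw [habs1]
                have h3 : |(T : ℝ) - (t : ℝ)| * |c| ≤ ((T : ℝ) + (t : ℝ)) * |c| :=
                  mul_le_mul_of_nonneg_right habs2 hc0
                have hc2 : (0 : ℝ) ≤ ((T : ℝ) + (t : ℝ)) * |c| := by positivity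
                have := abs_nonneg g
                linarith
    have heq : (fun ω => (if (s : ℝ) + (La a' ω : ℝ) ≤ (((t + s : ℕ)) : ℝ) then
        g + ((T : ℝ) - ((s : ℝ) + (La a' ω : ℝ))) * c
      else h + ((((t + s : ℕ)) : ℝ) - (s : ℝ) + ((a' : ℕ) : ℝ)) * m
            + ((T : ℝ) - (((t + s : ℕ)) : ℝ)) * c))
        = fun ω => ψ ω - (s : ℝ) * c := by
      funext ω
      simp only [hψ]
      by_cases hcase : (La a' ω : ℝ) ≤ (t : ℝ)
      · rw [if_pos (by push_cast; linarith), if_pos (by push_cast; linarith)]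
        push_cast; ring
      · rw [if_neg (by push_cast; push_neg; push_neg at hcase; linarith),
            if_neg (by push_cast; push_neg; push_neg at hcase; linarith)]
        push_cast; ring
    rw [h1, h2, heq, integral_sub hint (integrable_const _), integral_const,
      probReal_univ]
    simp
  -- inf over the shifted window
  have infeq : ∀ (a' τ : ℕ), 1 ≤ τ → τ + s ≤ T →
      (∀ t : ℕ, 1 ≤ t → t ≤ T → f 0 a' τ ≤ f 0 a' t) →
      (Finset.Icc (s + 1) T).inf' hne (f s a') = f 0 a' τ - (s : ℝ) * c := by
    intro a' τ hτ1 hτs hmin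
    apply le_antisymm
    · have hmem : τ + s ∈ Finset.Icc (s + 1) T := by
        simp only [Finset.mem_Icc]; omega
      calc (Finset.Icc (s + 1) T).inf' hne (f s a') ≤ f s a' (τ + s) :=
            Finset.inf'_le _ hmem
        _ = f 0 a' τ - (s : ℝ) * c := key a' τ hτ1 hτs
    · apply Finset.le_inf'
      intro t htmem
      simp only [Finset.mem_Icc] at htmem
      obtain ⟨h1', h2'⟩ := htmem
      have hts : t = (t - s) + s := by omega
      rw [hts, key a' (t - s) (by omega) (by omega)]
      have := hmin (t - s) (by omega) (by omega)
      linarith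
  have inf0 : ∀ (a' τ : ℕ), 1 ≤ τ → τ ≤ T →
      (∀ t : ℕ, 1 ≤ t → t ≤ T → f 0 a' τ ≤ f 0 a' t) →
      (Finset.Icc 1 T).inf' hne0 (f 0 a') = f 0 a' τ := by
    intro a' τ hτ1 hτ2 hmin
    apply le_antisymm
    · exact Finset.inf'_le _ (by simp only [Finset.mem_Icc]; omega)
    · apply Finset.le_inf'
      intro t htmem
      simp only [Finset.mem_Icc] at htmem
      exact hmin t htmem.1 htmem.2
  rw [infeq a τa hτa1 hτa3 hτamin, infeq 0 τ₀ hτ₀1 hτ₀3 hτ₀min,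
    inf0 a τa hτa1 hτa2 hτamin, inf0 0 τ₀ hτ₀1 hτ₀2 hτ₀min]
  ring
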